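/- Fix blocks B₁, …, B_D, let χ₊ : ℕ → Fin D be a semi-infinite block sequence with reflection-doubling χ, and let λ ∈ ℝ. If there exist a nonzero x ∈ ℓ²(ℤ≥0) with (J₊(χ₊) − λ)x = 0 and a nonzero y ∈ ℓ²(ℤ<0) with (J₋(χ₊) − λ)y = 0, then there exists a nonzero z ∈ ℓ²(ℤ) with (J(χ) − λ)z = 0. In particular, if J(χ') − λ is boundedly invertible for every χ' : ℤ → Fin D, then for every χ₊ : ℕ → Fin D at least one of the operators J₊(χ₊) − λ and J₋(χ₊) − λ has trivial kernel. -/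

import Mathlib

noncomputable section

/-- A block: a nonempty finite list of triples `(v, ℓ, s)` of positive reals. -/
def Block : Type :=
  {L : List (ℝ × ℝ × ℝ) // L ≠ [] ∧ ∀ t ∈ L, 0 < t.1 ∧ 0 < t.2.1 ∧ 0 < t.2.2}

/-- The single-resonator propagation matrix `P^λ_{ℓ,s,v}`. -/
def propMat (lam ℓ s v : ℝ) : Matrix (Fin 2) (Fin 2) ℝ :=
  !![1 - s * ℓ * lam / v ^ 2, s; -(ℓ * lam / v ^ 2), 1]

/-- Propagation matrix of a resonator triple `(v, ℓ, s)`. -/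
def propOf (lam : ℝ) (t : ℝ × ℝ × ℝ) : Matrix (Fin 2) (Fin 2) ℝ :=
  propMat lam t.2.1 t.2.2 t.1

/-- The block propagation matrix `𝒫^λ_B = P^λ_{ℓ_L,s_L,v_L} ⋯ P^λ_{ℓ₁,s₁,v₁}`. -/
def blockMat (lam : ℝ) (Bd : Block) : Matrix (Fin 2) (Fin 2) ℝ :=
  ((Bd.1.map (propOf lam)).reverse).prod

/-- `data` (with block-start indices `st`) is the bi-infinite concatenation of the
blocks `B (χ j)`. -/
def IsConcat {D : ℕ} (B : Fin D → Block) (χ : ℤ → Fin D)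
    (data : ℤ → ℝ × ℝ × ℝ) (st : ℤ → ℤ) : Prop :=
  st 0 = 0 ∧ (∀ j : ℤ, st (j + 1) = st j + ((B (χ j)).1.length : ℤ)) ∧
    ∀ (j : ℤ) (k : ℕ) (hk : k < (B (χ j)).1.length),
      data (st j + (k : ℤ)) = (B (χ j)).1.get ⟨k, hk⟩

/-- `ℓ²(ℤ)`. -/
abbrev Hint := lp (fun _ : ℤ => ℝ) 2
/-- `ℓ²(ℤ≥0)`. -/
abbrev Hnat := lp (fun _ : ℕ => ℝ) 2
/-- `ℓ²(ℤ<0)`. -/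
abbrev Hneg := lp (fun _ : {i : ℤ // i < 0} => ℝ) 2

/-- The off-diagonal band `a(i) = −v_i v_{i+1}/(s_i √(ℓ_i ℓ_{i+1}))`,
with `data i = (v_i, ℓ_i, s_i)`. -/
def aSeq (data : ℤ → ℝ × ℝ × ℝ) (i : ℤ) : ℝ :=
  -((data i).1 * (data (i + 1)).1) /
    ((data i).2.2 * Real.sqrt ((data i).2.1 * (data (i + 1)).2.1))

/-- The diagonal band `b(i) = (v_i²/ℓ_i)(1/s_{i−1} + 1/s_i)`. -/
def bSeq (data : ℤ → ℝ × ℝ × ℝ) (i : ℤ) : ℝ :=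
  ((data i).1 ^ 2 / (data i).2.1) * (1 / (data (i - 1)).2.2 + 1 / (data i).2.2)

/-- `J` is the Jacobi operator on `ℓ²(ℤ)` with bands `a`, `b` built from `data`. -/
def IsJacobiOf (data : ℤ → ℝ × ℝ × ℝ) (J : Hint →L[ℝ] Hint) : Prop :=
  ∀ (x : Hint) (i : ℤ),
    J x i = aSeq data (i - 1) * x (i - 1) + bSeq data i * x i + aSeq data i * x (i + 1)

/-- `Jp` is the positive semi-infinite Jacobi operator with corner entry
`b(0) = v₀²/(ℓ₀s₀)`. -/
def IsJacobiPlusOf (data : ℤ → ℝ × ℝ × ℝ) (Jp : Hnat →L[ℝ] Hnat) : Prop :=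
  (∀ x : Hnat,
      Jp x 0 = (data 0).1 ^ 2 / ((data 0).2.1 * (data 0).2.2) * x 0 + aSeq data 0 * x 1) ∧
  (∀ (x : Hnat) (n : ℕ),
      Jp x (n + 1) = aSeq data (n : ℤ) * x n + bSeq data ((n : ℤ) + 1) * x (n + 1) +
        aSeq data ((n : ℤ) + 1) * x (n + 2))

/-- `Jm` is the negative semi-infinite Jacobi operator with corner entry
`b(−1) = v₋₁²/(ℓ₋₁s₋₂)`. -/
def IsJacobiMinusOf (data : ℤ → ℝ × ℝ × ℝ) (Jm : Hneg →L[ℝ] Hneg) : Prop :=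
  (∀ x : Hneg,
      Jm x ⟨-1, by norm_num⟩ =
        (data (-1)).1 ^ 2 / ((data (-1)).2.1 * (data (-2)).2.2) * x ⟨-1, by norm_num⟩ +
          aSeq data (-2) * x ⟨-2, by norm_num⟩) ∧
  (∀ (x : Hneg) (i : ℤ) (hi : i < -1),
      Jm x ⟨i, by omega⟩ =
        aSeq data (i - 1) * x ⟨i - 1, by omega⟩ + bSeq data i * x ⟨i, by omega⟩ +
          aSeq data i * x ⟨i + 1, by omega⟩)

/-- The reflection-doubling of a semi-infinite sequence. -/
def reflDouble {D : ℕ} (χp : ℕ → Fin D) : ℤ → Fin D :=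
  fun i => if 0 ≤ i then χp i.toNat else χp (-i - 1).toNat


/-- Glue `x : ℓ²(ℕ)` and `y : ℓ²(ℤ<0)` with coefficients `α`, `β` into a function on `ℤ`. -/
def glueFun (α β : ℝ) (x : Hnat) (y : Hneg) : ℤ → ℝ :=
  fun i => if h : 0 ≤ i then α * x i.toNat else β * y ⟨i, not_le.mp h⟩

lemma glueFun_nat (α β : ℝ) (x : Hnat) (y : Hneg) (n : ℕ) :
    glueFun α β x y (n : ℤ) = α * x n := by
  simp [glueFun]

lemma glueFun_neg (α β : ℝ) (x : Hnat) (y : Hneg) {i : ℤ} (h : i < 0) :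
    glueFun α β x y i = β * y ⟨i, h⟩ := by
  simp [glueFun, h.not_ge]

lemma memℓp_glueFun (α β : ℝ) (x : Hnat) (y : Hneg) : Memℓp (glueFun α β x y) 2 := by
  apply memℓp_gen
  have hxs : Summable (fun n : ℕ => ‖α * x n‖ ^ (2 : ENNReal).toReal) := by
    have := ((lp.memℓp x).const_smul α).summable (by norm_num : 0 < (2 : ENNReal).toReal)
    simpa [Pi.smul_apply, smul_eq_mul] using this
  have hys : Summable (fun j : {i : ℤ // i < 0} => ‖β * y j‖ ^ (2 : ENNReal).toReal) := by
    have := ((lp.memℓp y).const_smul β).summable (by norm_num : 0 < (2 : ENNReal).toReal)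
    simpa [Pi.smul_apply, smul_eq_mul] using this
  set G : ℤ → ℝ :=
    fun i => if 0 ≤ i then ‖glueFun α β x y i‖ ^ (2 : ENNReal).toReal else 0 with hG
  set H : ℤ → ℝ :=
    fun i => if 0 ≤ i then 0 else ‖glueFun α β x y i‖ ^ (2 : ENNReal).toReal with hH
  have hGs : Summable G := by
    have hinj : Function.Injective ((↑) : ℕ → ℤ) := fun a b h => by exact_mod_cast h
    have hvan : ∀ i ∉ Set.range ((↑) : ℕ → ℤ), G i = 0 := by
      intro i hi
      have h0 : ¬ 0 ≤ i := by
        intro h0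
        exact hi ⟨i.toNat, by omega⟩
      simp [hG, h0]
    refine (Function.Injective.summable_iff hinj hvan).mp ?_
    refine hxs.congr fun n => ?_
    simp [hG, Function.comp, glueFun_nat, ← abs_mul, sq_abs]
  have hHs : Summable H := by
    have hinj : Function.Injective (Subtype.val : {i : ℤ // i < 0} → ℤ) :=
      Subtype.val_injective
    have hvan : ∀ i ∉ Set.range (Subtype.val : {i : ℤ // i < 0} → ℤ), H i = 0 := by
      intro i hi
      have h0 : 0 ≤ i := by
        by_contra h
        exact hi ⟨⟨i, by omega⟩, rfl⟩
      simp [hH, h0]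
    refine (Function.Injective.summable_iff hinj hvan).mp ?_
    refine hys.congr fun j => ?_
    have hj := j.2
    simp [hH, Function.comp, glueFun_neg α β x y hj, hj.not_ge, ← abs_mul, sq_abs]
  refine (hGs.add hHs).congr fun i => ?_
  by_cases h0 : 0 ≤ i <;> simp [hG, hH, h0]

lemma glue_eigen (data : ℤ → ℝ × ℝ × ℝ)
    {J : Hint →L[ℝ] Hint} (hJ : IsJacobiOf data J)
    {Jp : Hnat →L[ℝ] Hnat} (hJp : IsJacobiPlusOf data Jp)
    {Jm : Hneg →L[ℝ] Hneg} (hJm : IsJacobiMinusOf data Jm)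
    {lam : ℝ} {x : Hnat} {y : Hneg} (hx : Jp x = lam • x) (hy : Jm y = lam • y)
    (α β : ℝ)
    (h1 : aSeq data (-1) * (β * y ⟨-1, by norm_num⟩) +
        (data 0).1 ^ 2 / ((data 0).2.1 * (data (-1)).2.2) * (α * x 0) = 0)
    (h2 : aSeq data (-1) * (α * x 0) +
        (data (-1)).1 ^ 2 / ((data (-1)).2.1 * (data (-1)).2.2) *
          (β * y ⟨-1, by norm_num⟩) = 0) :
    J ⟨glueFun α β x y, memℓp_glueFun α β x y⟩ =
      lam • ⟨glueFun α β x y, memℓp_glueFun α β x y⟩ := by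
  set z : Hint := ⟨glueFun α β x y, memℓp_glueFun α β x y⟩ with hzdef
  have hzc : ∀ i : ℤ, z i = glueFun α β x y i := fun _ => rfl
  have hxc : ∀ n : ℕ, Jp x n = lam * x n := by
    intro n; rw [hx, lp.coeFn_smul]; rfl
  have hyc : ∀ j : {i : ℤ // i < 0}, Jm y j = lam * y j := by
    intro j; rw [hy, lp.coeFn_smul]; rfl
  apply lp.ext
  funext i
  have hsm : (lam • z) i = lam * z i := by rw [lp.coeFn_smul]; rfl
  show J z i = (lam • z) i
  rw [hsm, hJ z i]
  simp only [hzc]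
  rcases lt_trichotomy i 0 with hi | hi | hi
  · rcases eq_or_lt_of_le (by omega : i ≤ -1) with hi1 | hi1
    · -- i = -1
      subst hi1
      have g2 : glueFun α β x y (-1 - 1) = β * y ⟨-2, by norm_num⟩ := by
        rw [show (-1 : ℤ) - 1 = -2 by norm_num]
        exact glueFun_neg α β x y (by norm_num)
      have g1 : glueFun α β x y (-1) = β * y ⟨-1, by norm_num⟩ :=
        glueFun_neg α β x y (by norm_num)
      have g0 : glueFun α β x y (-1 + 1) = α * x 0 := by
        rw [show (-1 : ℤ) + 1 = ((0 : ℕ) : ℤ) by norm_num]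
        exact glueFun_nat α β x y 0
      rw [g2, g1, g0, show (-1 : ℤ) - 1 = -2 by norm_num]
      have hm := (hJm.1 y).symm.trans (hyc ⟨-1, by norm_num⟩)
      simp only [bSeq, show (-1 : ℤ) - 1 = -2 by norm_num]
      linear_combination h2 + β * hm
    · -- i ≤ -2
      have hilt : i < -1 := by omega
      rw [glueFun_neg α β x y (show i - 1 < 0 by omega),
        glueFun_neg α β x y (show i < 0 by omega),
        glueFun_neg α β x y (show i + 1 < 0 by omega)]
      have hm := (hJm.2 y i hilt).symm.trans (hyc ⟨i, by omega⟩)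
      linear_combination β * hm
  · -- i = 0
    subst hi
    have gm1 : glueFun α β x y (0 - 1) = β * y ⟨-1, by norm_num⟩ := by
      rw [show (0 : ℤ) - 1 = -1 by norm_num]
      exact glueFun_neg α β x y (by norm_num)
    have g0 : glueFun α β x y 0 = α * x 0 := glueFun_nat α β x y 0
    have g1 : glueFun α β x y (0 + 1) = α * x 1 := by
      rw [show (0 : ℤ) + 1 = ((1 : ℕ) : ℤ) by norm_num]
      exact glueFun_nat α β x y 1
    rw [gm1, g0, g1, show (0 : ℤ) - 1 = -1 by norm_num]
    have hp := (hJp.1 x).symm.trans (hxc 0)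
    simp only [bSeq, show (0 : ℤ) - 1 = -1 by norm_num]
    linear_combination h1 + α * hp
  · -- i ≥ 1
    obtain ⟨n, rfl⟩ : ∃ n : ℕ, i = (n : ℤ) + 1 := ⟨(i - 1).toNat, by omega⟩
    have g1 : glueFun α β x y ((n : ℤ) + 1 - 1) = α * x n := by
      rw [show ((n : ℤ) + 1 - 1) = ((n : ℕ) : ℤ) by ring]
      exact glueFun_nat α β x y n
    have g2 : glueFun α β x y ((n : ℤ) + 1) = α * x (n + 1) := by
      rw [show ((n : ℤ) + 1) = (((n + 1 : ℕ)) : ℤ) by push_cast; ring]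
      exact glueFun_nat α β x y (n + 1)
    have g3 : glueFun α β x y ((n : ℤ) + 1 + 1) = α * x (n + 2) := by
      rw [show ((n : ℤ) + 1 + 1) = (((n + 2 : ℕ)) : ℤ) by push_cast; ring]
      exact glueFun_nat α β x y (n + 2)
    rw [g1, g2, g3, show ((n : ℤ) + 1 - 1) = ((n : ℕ) : ℤ) by ring]
    have hp := (hJp.2 x n).symm.trans (hxc (n + 1))
    linear_combination α * hp


theorem stmt_15 (D : ℕ) (B : Fin D → Block) (χp : ℕ → Fin D)
    (data : ℤ → ℝ × ℝ × ℝ) (st : ℤ → ℤ)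
    (hconcat : IsConcat B (reflDouble χp) data st)
    (J : Hint →L[ℝ] Hint) (hJ : IsJacobiOf data J)
    (Jp : Hnat →L[ℝ] Hnat) (hJp : IsJacobiPlusOf data Jp)
    (Jm : Hneg →L[ℝ] Hneg) (hJm : IsJacobiMinusOf data Jm)
    (lam : ℝ) :
    ((∃ x : Hnat, x ≠ 0 ∧ Jp x = lam • x) → (∃ y : Hneg, y ≠ 0 ∧ Jm y = lam • y) →
      ∃ z : Hint, z ≠ 0 ∧ J z = lam • z) ∧
    ((∀ (χ' : ℤ → Fin D) (data' : ℤ → ℝ × ℝ × ℝ) (st' : ℤ → ℤ), IsConcat B χ' data' st' →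
        ∀ J' : Hint →L[ℝ] Hint, IsJacobiOf data' J' → lam ∉ spectrum ℝ J') →
      (∀ x : Hnat, Jp x = lam • x → x = 0) ∨ (∀ y : Hneg, Jm y = lam • y → y = 0)) := by

  have hpos0 : 0 < (data 0).1 ∧ 0 < (data 0).2.1 ∧ 0 < (data 0).2.2 := by
    obtain ⟨hst0, hstep, hdata⟩ := hconcat
    have hlen0 : 0 < (B (reflDouble χp 0)).1.length :=
      List.length_pos_iff.mpr (B (reflDouble χp 0)).2.1
    have hd0 := hdata 0 0 hlen0
    rw [show st 0 + ((0 : ℕ) : ℤ) = 0 by rw [hst0]; norm_num] at hd0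
    rw [hd0]
    exact (B (reflDouble χp 0)).2.2 _ (List.get_mem _ _)
  have hposm : 0 < (data (-1)).1 ∧ 0 < (data (-1)).2.1 ∧ 0 < (data (-1)).2.2 := by
    obtain ⟨hst0, hstep, hdata⟩ := hconcat
    have hL : 0 < (B (reflDouble χp (-1))).1.length :=
      List.length_pos_iff.mpr (B (reflDouble χp (-1))).2.1
    have hstm : st (-1) = -((B (reflDouble χp (-1))).1.length : ℤ) := by
      have h := hstep (-1)
      norm_num at h
      rw [hst0] at h
      omega
    have hk : (B (reflDouble χp (-1))).1.length - 1 < (B (reflDouble χp (-1))).1.length := by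
      omega
    have hdm := hdata (-1) ((B (reflDouble χp (-1))).1.length - 1) hk
    rw [hstm, show -((B (reflDouble χp (-1))).1.length : ℤ) +
        (((B (reflDouble χp (-1))).1.length - 1 : ℕ) : ℤ) = -1 by omega] at hdm
    rw [hdm]
    exact (B (reflDouble χp (-1))).2.2 _ (List.get_mem _ _)
  have part1 : (∃ x : Hnat, x ≠ 0 ∧ Jp x = lam • x) →
      (∃ y : Hneg, y ≠ 0 ∧ Jm y = lam • y) → ∃ z : Hint, z ≠ 0 ∧ J z = lam • z := by
    rintro ⟨x, hx0, hx⟩ ⟨y, hy0, hy⟩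
    by_cases hX : (x 0 : ℝ) = 0
    · refine ⟨⟨glueFun 1 0 x y, memℓp_glueFun 1 0 x y⟩, ?_, ?_⟩
      · intro hz
        apply hx0
        apply lp.ext
        funext n
        have h' := congrArg (fun w : Hint => (w : ℤ → ℝ) (n : ℤ)) hz
        simp only [lp.coeFn_zero, Pi.zero_apply] at h'
        have : glueFun 1 0 x y (n : ℤ) = 0 := h'
        rw [glueFun_nat] at this
        simpa using this
      · exact glue_eigen data hJ hJp hJm hx hy 1 0 (by rw [hX]; ring) (by rw [hX]; ring)
    · by_cases hY : (y ⟨-1, by norm_num⟩ : ℝ) = 0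
      · refine ⟨⟨glueFun 0 1 x y, memℓp_glueFun 0 1 x y⟩, ?_, ?_⟩
        · intro hz
          apply hy0
          apply lp.ext
          funext j
          have h' := congrArg (fun w : Hint => (w : ℤ → ℝ) j.1) hz
          simp only [lp.coeFn_zero, Pi.zero_apply] at h'
          have : glueFun 0 1 x y j.1 = 0 := h'
          rw [glueFun_neg 0 1 x y j.2] at this
          simpa using this
        · exact glue_eigen data hJ hJp hJm hx hy 0 1 (by rw [hY]; ring) (by rw [hY]; ring)
      · have hnn : (0 : ℝ) ≤ (data (-1)).2.1 * (data 0).2.1 :=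
          le_of_lt (mul_pos hposm.2.1 hpos0.2.1)
        have hs : Real.sqrt ((data (-1)).2.1 * (data 0).2.1) ^ 2 =
            (data (-1)).2.1 * (data 0).2.1 := Real.sq_sqrt hnn
        have hA2 : (aSeq data (-1)) ^ 2 =
            ((data (-1)).1 * (data 0).1) ^ 2 /
              ((data (-1)).2.2 ^ 2 * ((data (-1)).2.1 * (data 0).2.1)) := by
          rw [aSeq, show (-1 : ℤ) + 1 = 0 by norm_num, div_pow, mul_pow, hs]
          ring
        have hApos : 0 < (aSeq data (-1)) ^ 2 := by
          rw [hA2]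
          have h1 := hposm.1; have h2 := hpos0.1; have h3 := hposm.2.1
          have h4 := hpos0.2.1; have h5 := hposm.2.2
          positivity
        have hA0 : aSeq data (-1) ≠ 0 := by
          intro h
          rw [h] at hApos
          norm_num at hApos
        set Y : ℝ := y ⟨-1, by norm_num⟩ with hYdef
        set α : ℝ := aSeq data (-1) * Y with hαdef
        set β : ℝ := -((data 0).1 ^ 2 / ((data 0).2.1 * (data (-1)).2.2)) * (x 0) with hβdef
        refine ⟨⟨glueFun α β x y, memℓp_glueFun α β x y⟩, ?_, ?_⟩
        · intro hz
          have h' := congrArg (fun w : Hint => (w : ℤ → ℝ) ((0 : ℕ) : ℤ)) hz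
          simp only [lp.coeFn_zero, Pi.zero_apply] at h'
          have : glueFun α β x y ((0 : ℕ) : ℤ) = 0 := h'
          rw [glueFun_nat] at this
          rcases mul_eq_zero.mp this with h | h
          · rw [hαdef] at h
            rcases mul_eq_zero.mp h with h' | h'
            · exact hA0 h'
            · exact hY h'
          · exact hX h
        · refine glue_eigen data hJ hJp hJm hx hy α β ?_ ?_
          · rw [hαdef, hβdef, ← hYdef]; ring
          · rw [hαdef, hβdef, ← hYdef]
            linear_combination (x 0) * Y * hA2
  refine ⟨part1, ?_⟩
  intro hall
  by_contra hcon
  push_neg at hcon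
  obtain ⟨⟨x, hx1, hx2⟩, ⟨y, hy1, hy2⟩⟩ := hcon
  obtain ⟨z, hz0, hz⟩ := part1 ⟨x, hx2, hx1⟩ ⟨y, hy2, hy1⟩
  have hspec : lam ∉ spectrum ℝ J := hall (reflDouble χp) data st hconcat J hJ
  rw [spectrum.notMem_iff] at hspec
  obtain ⟨u, hu⟩ := hspec
  have h0 : (algebraMap ℝ (Hint →L[ℝ] Hint) lam - J) z = 0 := by
    rw [ContinuousLinearMap.sub_apply, Algebra.algebraMap_eq_smul_one,
      ContinuousLinearMap.smul_apply, ContinuousLinearMap.one_apply, hz, sub_self]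
  apply hz0
  calc z = ((↑u⁻¹ * ↑u : Hint →L[ℝ] Hint)) z := by rw [Units.inv_mul]; rfl
    _ = (↑u⁻¹ : Hint →L[ℝ] Hint) ((↑u : Hint →L[ℝ] Hint) z) := rfl
    _ = (↑u⁻¹ : Hint →L[ℝ] Hint) 0 := by rw [hu, h0]
    _ = 0 := map_zero _
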